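/- Let K₀ denote the modified Bessel function of the second kind of order zero, defined for y > 0 by K₀(y) = ∫_0^∞ exp(-y cosh t) dt. Then ∫_0^∞ 4x·K₀(2x) dx = 1; in particular, x ↦ 4x·K₀(2x) is a probability density on (0,∞). -/

import Mathlib

open Real MeasureTheory Set

open Filter
lemma auxA {b : ℝ} (hb : 0 < b) :
    ∫ x in Ioi (0:ℝ), x * Real.exp (-(b * x)) = (1/b)^2 := by
  have h := Real.integral_rpow_mul_exp_neg_mul_Ioi (a := 2) (r := b) two_pos hb
  push_cast at h
  rw [show ((2:ℝ)) = ((2:ℕ):ℝ) by norm_num, Real.rpow_natCast] at h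
  push_cast at h
  rw [Real.Gamma_two, mul_one] at h
  rw [← h]
  refine setIntegral_congr_fun measurableSet_Ioi (fun x hx => ?_)
  norm_num

lemma hasDerivAt_g (t : ℝ) :
    HasDerivAt (fun t => -2 * (Real.exp (2*t) + 1)⁻¹) ((Real.cosh t ^ 2)⁻¹) t := by
  have h1 : HasDerivAt (fun t : ℝ => 2*t) 2 t := by
    simpa using (hasDerivAt_id t).const_mul 2
  have h2 := ((h1.exp.add_const 1).inv (by positivity)).const_mul (-2)
  refine h2.congr_deriv ?_
  have he := Real.exp_ne_zero t
  rw [Real.cosh_eq, show (2:ℝ)*t = t + t by ring, Real.exp_add, Real.exp_neg]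
  field_simp

lemma tendsto_g : Tendsto (fun t => -2 * (Real.exp (2*t) + 1)⁻¹) atTop (nhds 0) := by
  have h : Tendsto (fun t : ℝ => Real.exp (2*t) + 1) atTop atTop := by
    apply tendsto_atTop_add_const_right
    exact Real.tendsto_exp_atTop.comp (tendsto_id.const_mul_atTop two_pos)
  simpa using h.inv_tendsto_atTop.const_mul (-2)

lemma g_pos : ∀ t ∈ Ioi (0:ℝ), 0 ≤ (Real.cosh t ^ 2)⁻¹ := fun t _ => by positivity

lemma intCosh : ∫ t in Ioi (0:ℝ), (Real.cosh t ^ 2)⁻¹ = 1 := by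
  have h := integral_Ioi_of_hasDerivAt_of_nonneg' (fun t _ => hasDerivAt_g t) g_pos tendsto_g
  rw [h]
  norm_num

lemma intCoshOn : IntegrableOn (fun t => (Real.cosh t ^ 2)⁻¹) (Ioi (0:ℝ)) :=
  integrableOn_Ioi_deriv_of_nonneg' (fun t _ => hasDerivAt_g t) g_pos tendsto_g

lemma innerInt (t : ℝ) :
    ∫ x in Ioi (0:ℝ), 4 * x * Real.exp (-(2*x) * Real.cosh t) = (Real.cosh t ^ 2)⁻¹ := by
  have hc : 0 < Real.cosh t := Real.cosh_pos t
  have h := auxA (b := 2 * Real.cosh t) (by positivity)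
  calc ∫ x in Ioi (0:ℝ), 4 * x * Real.exp (-(2*x) * Real.cosh t)
      = ∫ x in Ioi (0:ℝ), 4 * (x * Real.exp (-(2 * Real.cosh t * x))) := by
        congr 1; ext x; ring_nf
    _ = 4 * ∫ x in Ioi (0:ℝ), x * Real.exp (-(2 * Real.cosh t * x)) := integral_const_mul _ _
    _ = (Real.cosh t ^ 2)⁻¹ := by rw [h]; field_simp; ring

lemma sectInt (t : ℝ) :
    IntegrableOn (fun x => 4 * x * Real.exp (-(2*x) * Real.cosh t)) (Ioi (0:ℝ)) := by
  have hc : 0 < Real.cosh t := Real.cosh_pos t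
  have h := (integrableOn_rpow_mul_exp_neg_mul_rpow (p := 1) (s := 1)
    (b := 2 * Real.cosh t) (by norm_num) zero_lt_one (by positivity)).const_mul 4
  refine MeasureTheory.IntegrableOn.congr_fun h (fun x hx => ?_) measurableSet_Ioi
  simp only [Real.rpow_one]
  ring_nf


/-- The modified Bessel function of the second kind of order zero,
`K₀(y) = ∫_0^∞ exp(-y cosh t) dt`. -/
noncomputable def besselK0 (y : ℝ) : ℝ :=
  ∫ t in Ioi (0 : ℝ), Real.exp (-y * Real.cosh t)

/-- `∫_0^∞ 4x·K₀(2x) dx = 1`: `x ↦ 4x·K₀(2x)` is a probability density on `(0,∞)`. -/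
theorem double_rayleigh_density_integral :
    (∫ x in Ioi (0 : ℝ), 4 * x * besselK0 (2 * x)) = 1 := by
  have hmeas : AEStronglyMeasurable
      (Function.uncurry fun x t => 4 * x * Real.exp (-(2*x) * Real.cosh t))
      ((volume.restrict (Ioi (0:ℝ))).prod (volume.restrict (Ioi (0:ℝ)))) := by
    apply Continuous.aestronglyMeasurable
    fun_prop
  have hint : Integrable (Function.uncurry fun x t => 4 * x * Real.exp (-(2*x) * Real.cosh t))
      ((volume.restrict (Ioi (0:ℝ))).prod (volume.restrict (Ioi (0:ℝ)))) := by
    rw [integrable_prod_iff' hmeas]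
    constructor
    · exact Eventually.of_forall fun t => sectInt t
    · apply intCoshOn.congr_fun ?_ measurableSet_Ioi
      intro t ht
      simp only [Function.uncurry_apply_pair]
      rw [← innerInt t]
      refine setIntegral_congr_fun measurableSet_Ioi (fun x hx => ?_)
      rw [Real.norm_of_nonneg ?_]
      have : 0 < x := hx
      positivity
  calc (∫ x in Ioi (0 : ℝ), 4 * x * besselK0 (2 * x))
      = ∫ x in Ioi (0:ℝ), ∫ t in Ioi (0:ℝ), 4 * x * Real.exp (-(2*x) * Real.cosh t) := by
        refine setIntegral_congr_fun measurableSet_Ioi (fun x hx => ?_)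
        rw [besselK0, ← integral_const_mul]
    _ = ∫ t in Ioi (0:ℝ), ∫ x in Ioi (0:ℝ), 4 * x * Real.exp (-(2*x) * Real.cosh t) :=
        integral_integral_swap hint
    _ = ∫ t in Ioi (0:ℝ), (Real.cosh t ^ 2)⁻¹ :=
        setIntegral_congr_fun measurableSet_Ioi (fun t _ => innerInt t)
    _ = 1 := intCosh
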